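/- Consider the decentralized network on a strongly connected graph G=(V,E) with |V|=n, local convex L-smooth functions f_i : ℝᵈ → ℝ and convex r : ℝᵈ → ℝ. Suppose sequences (x_i^k, y_i^k, z_i^k) are generated by z_i^{k+1} = prox_{r, Diag(p_i^k)}(x_i^k − p_i^k ⊙ (∇f_i(x_i^k) + y_i^k)), y_i^{k+1} = y_i^k + Σ_{j∈N(i)} p_{i,j,1}^k ⊙ (z_i^{k+1} − z_j^{k+1}), x_i^{k+1} = z_i^{k+1} − Σ_{j∈N(i)} p_{i,j,2}^k ⊙ (z_i^{k+1} − z_j^{k+1}), with y_i^0 = 0, symmetry p_{i,j,1}^k = p_{j,i,1}^k, and coordinatewise bounds m ≤ [p_i^k]_l, m ≤ [p_{i,j,1}^k]_l ≤ M, |[p_{i,j,2}^k]_l| ≤ M for 0 < m < M < ∞. If (x_i^k, y_i^k, z_i^k) converge to limits (x_i⋆, y_i⋆, z_i⋆) for all i, then there exists x⋆ minimizing (1/n)Σ_i f_i(x) + r(x) with x_i⋆ = z_i⋆ = x⋆ and y_i⋆ ∈ −∇f_i(x⋆) − ∂r(x⋆) for all i. -/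

import Mathlib

open Matrix Filter

/-- Coordinatewise gradient of `f : ℝᵈ → ℝ` at `x`. -/
noncomputable def grad {d : ℕ} (f : (Fin d → ℝ) → ℝ) (x : Fin d → ℝ) : Fin d → ℝ :=
  fun l => fderiv ℝ f x (Pi.single l 1)

/-- Convex subdifferential of `r` at `z`. -/
def subdiff {d : ℕ} (r : (Fin d → ℝ) → ℝ) (z : Fin d → ℝ) : Set (Fin d → ℝ) :=
  {g | ∀ x, r z + g ⬝ᵥ (x - z) ≤ r x}

/-- Diagonally-weighted proximal objective `r(u) + (1/2)‖u - w‖²_{Diag(p)⁻¹}`. -/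
noncomputable def diagProxObj {d : ℕ} (r : (Fin d → ℝ) → ℝ) (p : Fin d → ℝ)
    (w u : Fin d → ℝ) : ℝ :=
  r u + (1 / 2) * ∑ l, (u l - w l) ^ 2 / p l

lemma le_add_eps {a b : ℝ} (h : ∀ ε : ℝ, 0 < ε → a ≤ b + ε) : a ≤ b := by
  by_contra hc
  push_neg at hc
  have := h ((a - b) / 2) (by linarith)
  linarith

lemma fderiv_eq_dot {d : ℕ} (f : (Fin d → ℝ) → ℝ) (x0 : Fin d → ℝ)
    (hd : DifferentiableAt ℝ f x0) (v : Fin d → ℝ) :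
    fderiv ℝ f x0 v = grad f x0 ⬝ᵥ v := by
  have hdec : v = ∑ l, v l • (Pi.single l 1 : Fin d → ℝ) := by
    funext j
    simp [Finset.sum_apply, Pi.single_apply]
  calc fderiv ℝ f x0 v = fderiv ℝ f x0 (∑ l, v l • (Pi.single l 1 : Fin d → ℝ)) := by rw [← hdec]
    _ = ∑ l, v l • (fderiv ℝ f x0 (Pi.single l (1:ℝ))) := by
        rw [map_sum]
        exact Finset.sum_congr rfl fun l _ => by rw [_root_.map_smul]
    _ = grad f x0 ⬝ᵥ v := by
        simp only [dotProduct, grad, smul_eq_mul]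
        exact Finset.sum_congr rfl fun l _ => mul_comm _ _

lemma convex_grad_ineq {d : ℕ} {f : (Fin d → ℝ) → ℝ} (hconv : ConvexOn ℝ Set.univ f)
    (hdiff : Differentiable ℝ f) (z u : Fin d → ℝ) :
    f z + grad f z ⬝ᵥ (u - z) ≤ f u := by
  set a : Fin d → ℝ := u - z with ha
  set g : ℝ → ℝ := fun t => f (z + t • a) with hg
  have hline : HasDerivAt g (fderiv ℝ f z a) 0 := by
    have h1 : HasDerivAt (fun t : ℝ => z + t • a) a 0 := by
      simpa using ((hasDerivAt_id (0:ℝ)).smul_const a).const_add z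
    have h2 : HasFDerivAt f (fderiv ℝ f z) (z + (0:ℝ) • a) := by
      simpa using (hdiff z).hasFDerivAt
    exact h2.comp_hasDerivAt 0 h1
  have hgc : ConvexOn ℝ Set.univ g := by
    have h := hconv.comp_affineMap (AffineMap.lineMap z u)
    have heq : (f ∘ (AffineMap.lineMap z u : ℝ →ᵃ[ℝ] (Fin d → ℝ))) = g := by
      funext t
      simp [hg, AffineMap.lineMap_apply_module', ha, add_comm]
    rw [heq] at h
    simpa using h
  have hslope := hgc.le_slope_of_hasDerivAt (Set.mem_univ 0) (Set.mem_univ (1:ℝ))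
    zero_lt_one hline
  have hs : slope g 0 1 = f u - f z := by
    have hg1 : g 1 = f u := by simp [hg, ha]
    have hg0 : g 0 = f z := by simp [hg]
    simp [slope_def_field, hg1, hg0]
  rw [hs] at hslope
  have := fderiv_eq_dot f z (hdiff z) a
  rw [this] at hslope
  linarith

lemma prox_subgrad {d : ℕ} {r : (Fin d → ℝ) → ℝ} (hr : ConvexOn ℝ Set.univ r)
    {p w z0 : Fin d → ℝ} (hp : ∀ l, 0 < p l)
    (hmin : ∀ u, diagProxObj r p w z0 ≤ diagProxObj r p w u) (u : Fin d → ℝ) :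
    r z0 + (fun l => (w l - z0 l) / p l) ⬝ᵥ (u - z0) ≤ r u := by
  set a : Fin d → ℝ := u - z0 with ha
  set A : ℝ := ∑ l, (z0 l - w l) * a l / p l with hA
  set C : ℝ := ∑ l, a l ^ 2 / p l with hC
  have hC0 : 0 ≤ C := Finset.sum_nonneg fun l _ => div_nonneg (sq_nonneg _) (hp l).le
  have hdot : (fun l => (w l - z0 l) / p l) ⬝ᵥ (u - z0) = -A := by
    simp only [dotProduct, hA, ← Finset.sum_neg_distrib]
    refine Finset.sum_congr rfl fun l _ => ?_
    simp only [ha, Pi.sub_apply]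
    ring
  have key : ∀ t : ℝ, 0 < t → t ≤ 1 → r z0 - A ≤ r u + t / 2 * C := by
    intro t ht ht1
    set ut : Fin d → ℝ := z0 + t • a with hut
    have hmin' := hmin ut
    have hconvx : r ut ≤ (1 - t) * r z0 + t * r u := by
      have h := hr.2 (Set.mem_univ z0) (Set.mem_univ u)
        (by linarith : (0:ℝ) ≤ 1 - t) ht.le (by ring)
      have : ut = (1 - t) • z0 + t • u := by
        funext l
        simp [hut, ha, Pi.smul_apply, smul_eq_mul]
        ring
      rw [this]
      simpa using h
  -- sum identity
    have hsum : ∑ l, (ut l - w l) ^ 2 / p l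
        = ∑ l, (z0 l - w l) ^ 2 / p l + (2 * t * A + t ^ 2 * C) := by
      rw [hA, hC, Finset.mul_sum, Finset.mul_sum, ← Finset.sum_add_distrib,
        ← Finset.sum_add_distrib]
      refine Finset.sum_congr rfl fun l _ => ?_
      have hpl := (hp l).ne'
      simp only [hut, Pi.add_apply, Pi.smul_apply, smul_eq_mul]
      field_simp
      ring
    rw [diagProxObj, diagProxObj, hsum] at hmin'
    have h1 : t * (r z0 - A - r u) ≤ t * (t / 2 * C) := by nlinarith
    have h2 := (mul_le_mul_iff_right₀ ht).mp h1
    linarith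
  rw [hdot]
  have : r z0 + -A = r z0 - A := by ring
  rw [this]
  refine le_add_eps fun ε hε => ?_
  have hC1 : (0:ℝ) < C + 1 := by linarith
  set t : ℝ := min 1 (2 * ε / (C + 1)) with htdef
  have htpos : 0 < t := lt_min one_pos (by positivity)
  have hk := key t htpos (min_le_left _ _)
  have h2 : t ≤ 2 * ε / (C + 1) := min_le_right _ _
  have h3 : t * (C + 1) ≤ 2 * ε := by
    rw [← le_div_iff₀ hC1]
    exact h2
  nlinarith

lemma sum_anti {n : ℕ} (G : SimpleGraph (Fin n)) [DecidableRel G.Adj]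
    (F : Fin n → Fin n → ℝ) (hF : ∀ i j, G.Adj i j → F i j = -F j i) :
    ∑ i, ∑ j ∈ G.neighborFinset i, F i j = 0 := by
  have h1 : ∑ i, ∑ j ∈ G.neighborFinset i, F i j
      = ∑ i, ∑ j, if G.Adj i j then F i j else 0 := by
    refine Finset.sum_congr rfl fun i _ => ?_
    rw [SimpleGraph.neighborFinset_eq_filter, Finset.sum_filter]
  have h2 : ∑ i : Fin n, ∑ j : Fin n, (if G.Adj i j then F i j else 0)
      = -∑ i : Fin n, ∑ j : Fin n, (if G.Adj i j then F i j else 0) := by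
    conv_lhs => rw [Finset.sum_comm]
    rw [← Finset.sum_neg_distrib]
    refine Finset.sum_congr rfl fun i _ => ?_
    rw [← Finset.sum_neg_distrib]
    refine Finset.sum_congr rfl fun j _ => ?_
    by_cases hadj : G.Adj i j
    · simp [hadj, hadj.symm, hF j i hadj.symm]
    · have : ¬ G.Adj j i := fun h => hadj h.symm
      simp [hadj, this]
  rw [h1]
  linarith [h2]

lemma consensus {n : ℕ} (G : SimpleGraph (Fin n)) [DecidableRel G.Adj] (hconn : G.Connected)
    {m M : ℝ} (hm : 0 < m) (w : Fin n → ℝ) (P D : ℕ → Fin n → Fin n → ℝ)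
    (S : ℕ → Fin n → ℝ)
    (hPm : ∀ k i j, G.Adj i j → m ≤ P k i j) (hPM : ∀ k i j, G.Adj i j → P k i j ≤ M)
    (hSeq : ∀ k i, S k i = ∑ j ∈ G.neighborFinset i, P k i j * D k i j)
    (hD : ∀ i j, G.Adj i j → Tendsto (fun k => D k i j) atTop (nhds (w i - w j)))
    (hS0 : ∀ i, Tendsto (fun k => S k i) atTop (nhds 0)) :
    ∀ i j, w i = w j := by
  have key : ∀ i, (∀ j ∈ G.neighborFinset i, w j ≤ w i)
      → ∀ j ∈ G.neighborFinset i, w j = w i := by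
    intro i hmax
    have hTk : ∀ k, m * ∑ j ∈ G.neighborFinset i, (w i - w j)
        ≤ S k i + M * ∑ j ∈ G.neighborFinset i, |D k i j - (w i - w j)| := by
      intro k
      rw [hSeq, Finset.mul_sum, Finset.mul_sum, ← Finset.sum_add_distrib]
      refine Finset.sum_le_sum fun j hj => ?_
      have hadj : G.Adj i j := by simpa using hj
      have h1 := hPm k i j hadj
      have h2 := hPM k i j hadj
      have hc : 0 ≤ w i - w j := by have := hmax j hj; linarith
      have habs := le_abs_self (D k i j - (w i - w j))
      have habs2 := neg_abs_le (D k i j - (w i - w j))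
      nlinarith
    have hT0 : Tendsto (fun k => S k i
        + M * ∑ j ∈ G.neighborFinset i, |D k i j - (w i - w j)|) atTop (nhds 0) := by
      have h1 : Tendsto (fun k => ∑ j ∈ G.neighborFinset i, |D k i j - (w i - w j)|)
          atTop (nhds 0) := by
        have := tendsto_finset_sum (G.neighborFinset i) fun j hj =>
          (((hD i j (by simpa using hj)).sub_const (w i - w j)).abs)
        simpa using this
      simpa using (hS0 i).add (h1.const_mul M)
    have hle : m * ∑ j ∈ G.neighborFinset i, (w i - w j) ≤ 0 :=
      ge_of_tendsto' hT0 hTk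
    have hnn : (0:ℝ) ≤ ∑ j ∈ G.neighborFinset i, (w i - w j) :=
      Finset.sum_nonneg fun j hj => by have := hmax j hj; linarith
    have hsum0 : ∑ j ∈ G.neighborFinset i, (w i - w j) = 0 := by nlinarith
    intro j hj
    have := (Finset.sum_eq_zero_iff_of_nonneg
      (fun j hj => by have := hmax j hj; linarith)).mp hsum0 j hj
    linarith
  have hne : Nonempty (Fin n) := hconn.nonempty
  obtain ⟨i0, -, hi0⟩ := Finset.exists_max_image Finset.univ w Finset.univ_nonempty
  have hwalk : ∀ (a b : Fin n) (q : G.Walk a b), w a = w i0 → w b = w i0 := by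
    intro a b q
    induction q with
    | nil => exact fun h => h
    | cons h q' ih =>
      rename_i u v' b' 
      intro hu
      apply ih
      have hv' : v' ∈ G.neighborFinset u := by simpa using h
      have := key u (fun j hj => by rw [hu]; exact hi0 j (Finset.mem_univ j)) v' hv'
      rw [this, hu]
  intro i j
  obtain ⟨qi⟩ := hconn.preconnected i0 i
  obtain ⟨qj⟩ := hconn.preconnected i0 j
  rw [hwalk _ _ qi rfl, hwalk _ _ qj rfl]

theorem stmt11 {n d : ℕ} (hn : 0 < n)
    (G : SimpleGraph (Fin n)) [DecidableRel G.Adj] (hconn : G.Connected)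
    (f : Fin n → (Fin d → ℝ) → ℝ) (L : NNReal)
    (hconv : ∀ i, ConvexOn ℝ Set.univ (f i)) (hdiff : ∀ i, Differentiable ℝ (f i))
    (hsmooth : ∀ i, LipschitzWith L fun x => fderiv ℝ (f i) x)
    (r : (Fin d → ℝ) → ℝ) (hr : ConvexOn ℝ Set.univ r) (hlsc : LowerSemicontinuous r)
    (p : ℕ → Fin n → Fin d → ℝ) (p1 p2 : ℕ → Fin n → Fin n → Fin d → ℝ)
    (x y z : ℕ → Fin n → Fin d → ℝ)
    (m M : ℝ) (hm : 0 < m) (hmM : m < M)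
    (hpb : ∀ k i l, m ≤ p k i l)
    (hp1b : ∀ k i j l, G.Adj i j → m ≤ p1 k i j l ∧ p1 k i j l ≤ M)
    (hp2b : ∀ k i j l, G.Adj i j → |p2 k i j l| ≤ M)
    (hp1sym : ∀ k i j, G.Adj i j → p1 k i j = p1 k j i)
    (hy0 : ∀ i, y 0 i = 0)
    (hz : ∀ k i u, diagProxObj r (p k i)
          (x k i - fun l => p k i l * (grad (f i) (x k i) l + y k i l)) (z (k + 1) i)
        ≤ diagProxObj r (p k i)
          (x k i - fun l => p k i l * (grad (f i) (x k i) l + y k i l)) u)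
    (hy : ∀ k i, y (k + 1) i
      = y k i + ∑ j ∈ G.neighborFinset i, p1 k i j * (z (k + 1) i - z (k + 1) j))
    (hx : ∀ k i, x (k + 1) i
      = z (k + 1) i - ∑ j ∈ G.neighborFinset i, p2 k i j * (z (k + 1) i - z (k + 1) j))
    (xs ys zs : Fin n → Fin d → ℝ)
    (hxc : ∀ i, Filter.Tendsto (fun k => x k i) Filter.atTop (nhds (xs i)))
    (hyc : ∀ i, Filter.Tendsto (fun k => y k i) Filter.atTop (nhds (ys i)))
    (hzc : ∀ i, Filter.Tendsto (fun k => z k i) Filter.atTop (nhds (zs i))) :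
    ∃ xstar : Fin d → ℝ,
      (∀ u, (n : ℝ)⁻¹ * ∑ i, f i xstar + r xstar ≤ (n : ℝ)⁻¹ * ∑ i, f i u + r u) ∧
        (∀ i, xs i = xstar ∧ zs i = xstar) ∧
        ∀ i, (-(grad (f i) xstar) - ys i) ∈ subdiff r xstar := by
  classical
  have hnR : (0:ℝ) < n := by exact_mod_cast hn
  set i0 : Fin n := ⟨0, hn⟩ with hi0def
  have hxcl : ∀ i l, Tendsto (fun k => x k i l) atTop (nhds (xs i l)) :=
    fun i l => tendsto_pi_nhds.mp (hxc i) l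
  have hycl : ∀ i l, Tendsto (fun k => y k i l) atTop (nhds (ys i l)) :=
    fun i l => tendsto_pi_nhds.mp (hyc i) l
  have hzcl : ∀ i l, Tendsto (fun k => z k i l) atTop (nhds (zs i l)) :=
    fun i l => tendsto_pi_nhds.mp (hzc i) l
  have hzcl' : ∀ i l, Tendsto (fun k => z (k + 1) i l) atTop (nhds (zs i l)) :=
    fun i l => (hzcl i l).comp (tendsto_add_atTop_nat 1)
  have hycl' : ∀ i l, Tendsto (fun k => y (k + 1) i l) atTop (nhds (ys i l)) :=
    fun i l => (hycl i l).comp (tendsto_add_atTop_nat 1)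
  -- consensus
  have hcons : ∀ i, zs i = zs i0 := by
    intro i
    funext l
    refine consensus G hconn hm (fun i => zs i l) (fun k i j => p1 k i j l)
      (fun k i j => z (k + 1) i l - z (k + 1) j l)
      (fun k i => y (k + 1) i l - y k i l)
      (fun k i j hadj => (hp1b k i j l hadj).1)
      (fun k i j hadj => (hp1b k i j l hadj).2) ?_ ?_ ?_ i i0
    · intro k i
      rw [hy k i]
      simp [Finset.sum_apply]
    · intro i j hadj
      exact (hzcl' i l).sub (hzcl' j l)
    · intro i
      simpa using (hycl' i l).sub (hycl i l)
  set xstar : Fin d → ℝ := zs i0 with hxstar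
  have hxz : ∀ i, xs i = zs i := by
    intro i
    funext l
    have h1 : Tendsto (fun k => x (k + 1) i l) atTop (nhds (xs i l)) :=
      (hxcl i l).comp (tendsto_add_atTop_nat 1)
    have h2 : Tendsto (fun k => x (k + 1) i l) atTop (nhds (zs i l)) := by
      have hterm : ∀ j ∈ G.neighborFinset i,
          Tendsto (fun k => p2 k i j l * (z (k + 1) i l - z (k + 1) j l)) atTop (nhds 0) := by
        intro j hj
        have hadj : G.Adj i j := by simpa using hj
        apply squeeze_zero_norm (a := fun k => M * |z (k + 1) i l - z (k + 1) j l|)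
        · intro k
          rw [Real.norm_eq_abs, abs_mul]
          exact mul_le_mul_of_nonneg_right (hp2b k i j l hadj) (abs_nonneg _)
        · have h3 : Tendsto (fun k => |z (k + 1) i l - z (k + 1) j l|) atTop
              (nhds |zs i l - zs j l|) := ((hzcl' i l).sub (hzcl' j l)).abs
          have : zs i l - zs j l = 0 := by rw [hcons i, hcons j]; ring
          rw [this] at h3
          simpa using h3.const_mul M
      have h4 := (hzcl' i l).sub (tendsto_finset_sum (G.neighborFinset i) hterm)
      simp only [Finset.sum_const_zero, sub_zero] at h4
      have heq : (fun k => z (k + 1) i l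
          - ∑ j ∈ G.neighborFinset i, p2 k i j l * (z (k + 1) i l - z (k + 1) j l))
          = fun k => x (k + 1) i l := by
        funext k
        rw [hx k i]
        simp [Finset.sum_apply]
      refine h4.congr fun k => ?_
      rw [hx k i]
      simp [Finset.sum_apply]
    exact tendsto_nhds_unique h1 h2
  -- sum of ys is zero
  have hysum : ∑ i, ys i = 0 := by
    have hyk : ∀ k, ∑ i, y k i = 0 := by
      intro k
      induction k with
      | zero => simp [hy0]
      | succ k ih =>
        have hstep : ∑ i, y (k + 1) i = ∑ i, y k i
            + ∑ i, ∑ j ∈ G.neighborFinset i, p1 k i j * (z (k + 1) i - z (k + 1) j) := by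
          simp [hy, Finset.sum_add_distrib]
        rw [hstep, ih, zero_add]
        funext l
        have := sum_anti G (fun i j => p1 k i j l * (z (k + 1) i l - z (k + 1) j l)) ?_
        · simpa [Finset.sum_apply] using this
        · intro i j hadj
          have hs := congrFun (hp1sym k i j hadj) l
          rw [hs]
          ring
    have hA : Tendsto (fun k => ∑ i, y k i) atTop (nhds (∑ i, ys i)) :=
      tendsto_finset_sum Finset.univ fun i _ => hyc i
    simp only [hyk] at hA
    exact tendsto_nhds_unique hA tendsto_const_nhds
  -- subgradient property
  have hzsx : ∀ i, zs i = xstar := fun i => hcons i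
  have hxsx : ∀ i, xs i = xstar := fun i => (hxz i).trans (hcons i)
  have hsub : ∀ i, (-(grad (f i) xstar) - ys i) ∈ subdiff r xstar := by
    intro i
    intro u
    set gk : ℕ → Fin d → ℝ := fun k l =>
      (x k i l - z (k + 1) i l) / p k i l - grad (f i) (x k i) l - y k i l with hgk
    have hk : ∀ k, r (z (k + 1) i) + (gk k) ⬝ᵥ (u - z (k + 1) i) ≤ r u := by
      intro k
      have hp : ∀ l, 0 < p k i l := fun l => lt_of_lt_of_le hm (hpb k i l)
      have hP := prox_subgrad hr hp (hz k i) u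
      have hw : (fun l => ((x k i - fun l => p k i l * (grad (f i) (x k i) l + y k i l)) l
          - z (k + 1) i l) / p k i l) = gk k := by
        funext l
        have hpl : p k i l ≠ 0 := (hp l).ne'
        rw [hgk]
        simp only [Pi.sub_apply]
        field_simp
        ring
      rwa [hw] at hP
    have hglim : ∀ l, Tendsto (fun k => gk k l) atTop
        (nhds ((-(grad (f i) xstar) - ys i) l)) := by
      intro l
      have h1 : Tendsto (fun k => (x k i l - z (k + 1) i l) / p k i l) atTop (nhds 0) := by
        apply squeeze_zero_norm (a := fun k => |x k i l - z (k + 1) i l| / m)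
        · intro k
          rw [Real.norm_eq_abs, abs_div]
          have hple : m ≤ |p k i l| := le_trans (hpb k i l) (le_abs_self _)
          exact div_le_div_of_nonneg_left (abs_nonneg _) hm hple
        · have h3 : Tendsto (fun k => |x k i l - z (k + 1) i l| / m) atTop
              (nhds (|xs i l - zs i l| / m)) := (((hxcl i l).sub (hzcl' i l)).abs).div_const m
          have : xs i l - zs i l = 0 := by rw [hxz i]; ring
          rw [this] at h3
          simpa using h3
      have h2 : Tendsto (fun k => grad (f i) (x k i) l) atTop
          (nhds (grad (f i) (xs i) l)) := by
        have hcnt : Continuous fun v : Fin d → ℝ => (fderiv ℝ (f i) v) (Pi.single l 1) :=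
          ((hsmooth i).continuous).clm_apply continuous_const
        have := (hcnt.tendsto (xs i)).comp (hxc i)
        simpa [grad, Function.comp_def] using this
      have h3 := hycl i l
      have h4 := (h1.sub h2).sub h3
      have h5 : (0:ℝ) - grad (f i) (xs i) l - ys i l = (-(grad (f i) xstar) - ys i) l := by
        simp [hxsx i]
      rw [h5] at h4
      exact h4
    have hdlim : Tendsto (fun k => (gk k) ⬝ᵥ (u - z (k + 1) i)) atTop
        (nhds ((-(grad (f i) xstar) - ys i) ⬝ᵥ (u - xstar))) := by
      simp only [dotProduct, Pi.sub_apply]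
      apply tendsto_finset_sum
      intro l _
      have hc : Tendsto (fun _ : ℕ => u l) atTop (nhds (u l)) := tendsto_const_nhds
      have hz2 : Tendsto (fun k => z (k + 1) i l) atTop (nhds (xstar l)) := by
        simpa [hzsx i] using hzcl' i l
      exact (hglim l).mul (hc.sub hz2)
    refine le_add_eps fun ε hε => ?_
    have hzx : Tendsto (fun k => z (k + 1) i) atTop (nhds xstar) := by
      have := (hzc i).comp (tendsto_add_atTop_nat 1)
      simpa [hzsx i, Function.comp_def] using this
    have hev : ∀ᶠ k in atTop, r xstar - ε < r (z (k + 1) i) :=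
      hzx.eventually (hlsc xstar (r xstar - ε) (by linarith))
    have hev2 : ∀ᶠ k in atTop,
        r xstar - ε + (gk k) ⬝ᵥ (u - z (k + 1) i) ≤ r u := by
      filter_upwards [hev] with k hk1
      have := hk k
      linarith
    have hlim2 : Tendsto (fun k => r xstar - ε + (gk k) ⬝ᵥ (u - z (k + 1) i)) atTop
        (nhds (r xstar - ε + (-(grad (f i) xstar) - ys i) ⬝ᵥ (u - xstar))) :=
      tendsto_const_nhds.add hdlim
    have := le_of_tendsto hlim2 hev2
    linarith
  refine ⟨xstar, ?_, fun i => ⟨hxsx i, hzsx i⟩, hsub⟩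
  intro u
  have hi : ∀ i, f i xstar + r xstar + (-(ys i)) ⬝ᵥ (u - xstar) ≤ f i u + r u := by
    intro i
    have h1 := convex_grad_ineq (hconv i) (hdiff i) xstar u
    have h2 := hsub i u
    have h3 : grad (f i) xstar ⬝ᵥ (u - xstar)
        + (-(grad (f i) xstar) - ys i) ⬝ᵥ (u - xstar) = (-(ys i)) ⬝ᵥ (u - xstar) := by
      rw [← add_dotProduct]
      congr 1
      abel
    linarith
  have hsumle : ∑ i, (f i xstar + r xstar + (-(ys i)) ⬝ᵥ (u - xstar))
      ≤ ∑ i, (f i u + r u) := Finset.sum_le_sum fun i _ => hi i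
  have hdots : ∑ i, (-(ys i)) ⬝ᵥ (u - xstar) = 0 := by
    simp only [dotProduct]
    rw [Finset.sum_comm]
    apply Finset.sum_eq_zero
    intro l _
    rw [← Finset.sum_mul]
    have hys0 : ∑ i, (-(ys i)) l = 0 := by
      have := congrFun hysum l
      simp only [Finset.sum_apply, Pi.zero_apply] at this
      simp [Finset.sum_apply, this]
    rw [hys0, zero_mul]
  have e1 : ∑ i, (f i xstar + r xstar + (-(ys i)) ⬝ᵥ (u - xstar))
      = (∑ i, f i xstar) + (n:ℝ) * r xstar := by
    rw [Finset.sum_add_distrib, Finset.sum_add_distrib, hdots, add_zero, Finset.sum_const,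
      Finset.card_univ, Fintype.card_fin, nsmul_eq_mul]
  have e2 : ∑ i, (f i u + r u) = (∑ i, f i u) + (n:ℝ) * r u := by
    rw [Finset.sum_add_distrib, Finset.sum_const, Finset.card_univ, Fintype.card_fin,
      nsmul_eq_mul]
  rw [e1, e2] at hsumle
  have h := mul_le_mul_of_nonneg_left hsumle (inv_nonneg.mpr hnR.le)
  have expand : ∀ s t : ℝ, (n:ℝ)⁻¹ * (s + (n:ℝ) * t) = (n:ℝ)⁻¹ * s + t := by
    intro s t
    field_simp
  rw [expand, expand] at h
  exact h
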